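/- Let V ∈ ℝ^{n×m}, S ∈ ℝ^{s×m}, λ > 0, and let V = L Q be a λ-LQ factorization (L Lᵀ = V Vᵀ + λ I_n, Q = L⁻¹ V). If ‖Q Sᵀ S Qᵀ − Q Qᵀ‖₂ ≤ 1/2, then (2/3)(V Sᵀ S Vᵀ + λ I_n) ⪯ V Vᵀ + λ I_n ⪯ 2(V Sᵀ S Vᵀ + λ I_n). -/

import Mathlib

open Matrix
open scoped Matrix.Norms.L2Operator

lemma quad_abs_le {n : ℕ} (E : Matrix (Fin n) (Fin n) ℝ) (x : Fin n → ℝ) :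
    |x ⬝ᵥ (E *ᵥ x)| ≤ ‖E‖ * (x ⬝ᵥ x) := by
  classical
  set x' : EuclideanSpace ℝ (Fin n) := (EuclideanSpace.equiv (Fin n) ℝ).symm x with hx'
  have h1 : x ⬝ᵥ (E *ᵥ x) = inner ℝ x' ((EuclideanSpace.equiv (Fin n) ℝ).symm (E *ᵥ x)) := by
    rw [EuclideanSpace.inner_eq_star_dotProduct]
    simp [hx', dotProduct, mul_comm]
  have h2 : |inner ℝ x' ((EuclideanSpace.equiv (Fin n) ℝ).symm (E *ᵥ x))|
      ≤ ‖x'‖ * ‖(EuclideanSpace.equiv (Fin n) ℝ).symm (E *ᵥ x)‖ :=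
    abs_real_inner_le_norm _ _
  have h3 := E.l2_opNorm_mulVec x'
  have h4 : x ⬝ᵥ x = ‖x'‖ * ‖x'‖ := by
    rw [← real_inner_self_eq_norm_mul_norm, EuclideanSpace.inner_eq_star_dotProduct]
    simp [hx', dotProduct]
  rw [h1, h4]
  calc |inner ℝ x' ((EuclideanSpace.equiv (Fin n) ℝ).symm (E *ᵥ (x' : Fin n → ℝ)))|
      ≤ ‖x'‖ * (‖E‖ * ‖x'‖) := h2.trans (by
        exact mul_le_mul_of_nonneg_left h3 (norm_nonneg _))
    _ = ‖E‖ * (‖x'‖ * ‖x'‖) := by ring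

lemma aux_psd {n : ℕ} (E : Matrix (Fin n) (Fin n) ℝ) (hE : E.IsHermitian)
    (h : ‖E‖ ≤ 1/2) (a b : ℝ) (hab : |b| / 2 ≤ a) :
    (a • (1 : Matrix (Fin n) (Fin n) ℝ) + b • E).PosSemidef := by
  rw [posSemidef_iff_dotProduct_mulVec]
  constructor
  · have h1 : Eᵀ = E := by simpa using hE.eq
    unfold Matrix.IsHermitian
    simp [conjTranspose_add, conjTranspose_smul, h1]
  · intro x
    have hsx : star x = x := by simp
    have key : |b * (x ⬝ᵥ (E *ᵥ x))| ≤ a * (x ⬝ᵥ x) := by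
      rw [abs_mul]
      have h0 := quad_abs_le E x
      have hxx : (0:ℝ) ≤ x ⬝ᵥ x := Finset.sum_nonneg fun i _ => mul_self_nonneg _
      calc |b| * |x ⬝ᵥ (E *ᵥ x)| ≤ |b| * (‖E‖ * (x ⬝ᵥ x)) :=
            mul_le_mul_of_nonneg_left h0 (abs_nonneg b)
        _ ≤ |b| * ((1/2) * (x ⬝ᵥ x)) := by
            apply mul_le_mul_of_nonneg_left _ (abs_nonneg b)
            exact mul_le_mul_of_nonneg_right h hxx
        _ = (|b| / 2) * (x ⬝ᵥ x) := by ring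
        _ ≤ a * (x ⬝ᵥ x) := mul_le_mul_of_nonneg_right hab hxx
    have expand : x ⬝ᵥ ((a • (1 : Matrix (Fin n) (Fin n) ℝ) + b • E) *ᵥ x)
        = a * (x ⬝ᵥ x) + b * (x ⬝ᵥ (E *ᵥ x)) := by
      simp [add_mulVec, smul_mulVec, dotProduct_add, dotProduct_smul, smul_eq_mul]
    rw [hsx, expand]
    have := neg_abs_le (b * (x ⬝ᵥ (E *ᵥ x)))
    linarith

/-- If V = L Q is a λ-LQ factorization and ‖Q Sᵀ S Qᵀ − Q Qᵀ‖₂ ≤ 1/2 then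
(2/3)(V Sᵀ S Vᵀ + λ Iₙ) ⪯ V Vᵀ + λ Iₙ ⪯ 2(V Sᵀ S Vᵀ + λ Iₙ). -/
theorem precond_quality {n m s : ℕ} (V : Matrix (Fin n) (Fin m) ℝ)
    (S : Matrix (Fin s) (Fin m) ℝ) (lam : ℝ) (hlam : 0 < lam)
    (L : Matrix (Fin n) (Fin n) ℝ) (hL : IsUnit L.det)
    (hLL : L * Lᵀ = V * Vᵀ + lam • (1 : Matrix (Fin n) (Fin n) ℝ))
    (h : ‖(L⁻¹ * V) * Sᵀ * S * (L⁻¹ * V)ᵀ - (L⁻¹ * V) * (L⁻¹ * V)ᵀ‖ ≤ 1/2) :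
    ((V * Vᵀ + lam • (1 : Matrix (Fin n) (Fin n) ℝ))
        - (2/3 : ℝ) • (V * Sᵀ * S * Vᵀ + lam • (1 : Matrix (Fin n) (Fin n) ℝ))).PosSemidef ∧
    ((2 : ℝ) • (V * Sᵀ * S * Vᵀ + lam • (1 : Matrix (Fin n) (Fin n) ℝ))
        - (V * Vᵀ + lam • (1 : Matrix (Fin n) (Fin n) ℝ))).PosSemidef := by
  set Q := L⁻¹ * V with hQdef
  set E := Q * Sᵀ * S * Qᵀ - Q * Qᵀ with hEdef
  have hLQ : L * Q = V := by
    rw [hQdef, ← Matrix.mul_assoc, Matrix.mul_nonsing_inv L hL, Matrix.one_mul]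
  have hEh : E.IsHermitian := by
    have h1 : Q * Sᵀ * S * Qᵀ = (Q * Sᵀ) * (Q * Sᵀ)ᴴ := by
      simp [conjTranspose_mul, Matrix.mul_assoc]
    have h2 : Q * Qᵀ = Q * Qᴴ := by simp
    rw [hEdef, h1, h2]
    exact (isHermitian_mul_conjTranspose_self _).sub (isHermitian_mul_conjTranspose_self _)
  have hLE : L * E * Lᵀ = V * Sᵀ * S * Vᵀ - V * Vᵀ := by
    have hQL : Qᵀ * Lᵀ = Vᵀ := by rw [← transpose_mul, hLQ]
    rw [hEdef, Matrix.mul_sub, Matrix.sub_mul]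
    congr 1
    · calc L * (Q * Sᵀ * S * Qᵀ) * Lᵀ = (L * Q) * Sᵀ * S * (Qᵀ * Lᵀ) := by
            simp only [Matrix.mul_assoc]
      _ = V * Sᵀ * S * Vᵀ := by rw [hLQ, hQL]
    · calc L * (Q * Qᵀ) * Lᵀ = (L * Q) * (Qᵀ * Lᵀ) := by simp only [Matrix.mul_assoc]
      _ = V * Vᵀ := by rw [hLQ, hQL]
  have congr_eq : ∀ a b : ℝ, L * (a • (1 : Matrix (Fin n) (Fin n) ℝ) + b • E) * Lᵀ
      = a • (V * Vᵀ + lam • (1 : Matrix (Fin n) (Fin n) ℝ))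
        + b • (V * Sᵀ * S * Vᵀ - V * Vᵀ) := by
    intro a b
    rw [Matrix.mul_add, Matrix.add_mul, Matrix.mul_smul, Matrix.smul_mul, mul_one,
      Matrix.mul_smul, Matrix.smul_mul, hLL, hLE]
  have hE2 : ‖E‖ ≤ 1/2 := h
  constructor
  · have hpsd := (aux_psd E hEh hE2 (1/3) (-(2/3)) (by rw [abs_neg, abs_of_pos] <;> norm_num)).mul_mul_conjTranspose_same L
    have : L * ((1/3 : ℝ) • (1 : Matrix (Fin n) (Fin n) ℝ) + (-(2/3) : ℝ) • E) * Lᴴ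
        = (V * Vᵀ + lam • (1 : Matrix (Fin n) (Fin n) ℝ))
          - (2/3 : ℝ) • (V * Sᵀ * S * Vᵀ + lam • (1 : Matrix (Fin n) (Fin n) ℝ)) := by
      rw [show (Lᴴ : Matrix (Fin n) (Fin n) ℝ) = Lᵀ from rfl, congr_eq]
      module
    rwa [this] at hpsd
  · have hpsd := (aux_psd E hEh hE2 1 2 (by rw [abs_of_pos] <;> norm_num)).mul_mul_conjTranspose_same L
    have : L * ((1 : ℝ) • (1 : Matrix (Fin n) (Fin n) ℝ) + (2 : ℝ) • E) * Lᴴ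
        = (2 : ℝ) • (V * Sᵀ * S * Vᵀ + lam • (1 : Matrix (Fin n) (Fin n) ℝ))
          - (V * Vᵀ + lam • (1 : Matrix (Fin n) (Fin n) ℝ)) := by
      rw [show (Lᴴ : Matrix (Fin n) (Fin n) ℝ) = Lᵀ from rfl, congr_eq]
      module
    rwa [this] at hpsd
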